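/- Let K be a field of characteristic zero, M a linear differential operator with polynomial coefficients, and H the weak Hermite reduction with respect to M. Then over the algebraic closure of K, the exceptional space Exc_M = H(M(K̄(x))) is spanned by the finite family: (a) H(M((x−α)^{−s})) for α a zero of the leading coefficient of M, s > 0 with ind_α(−s) = 0; (b) H(M((x−α)^{−s})) for α a zero of the leading coefficient, 0 < s ≤ σ_α; (c) H(M(x^s)) for s ≥ 0 with ind_∞(−s) = 0. In particular, Exc_M is finite-dimensional over K̄. -/

import Mathlib

open Polynomial

/-- The derivative of a rational function, `(p/q)' = (p'q − pq')/q²`. -/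
noncomputable def ratDeriv {K : Type*} [Field K] (f : RatFunc K) : RatFunc K :=
  (algebraMap K[X] (RatFunc K) (derivative f.num) * algebraMap K[X] (RatFunc K) f.denom -
      algebraMap K[X] (RatFunc K) f.num * algebraMap K[X] (RatFunc K) (derivative f.denom)) /
    algebraMap K[X] (RatFunc K) (f.denom ^ 2)

/-- The action of the differential operator `M = ∑_{i=0}^r pᵢ ∂ⁱ` (with polynomial
coefficients `pᵢ`) on a rational function. -/
noncomputable def applyOp {K : Type*} [Field K] (r : ℕ) (p : ℕ → K[X]) (f : RatFunc K) :
    RatFunc K :=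
  ∑ i ∈ Finset.range (r + 1), algebraMap K[X] (RatFunc K) (p i) * ratDeriv^[i] f

/-- `f` has no pole at `α`. -/
def regAt {K : Type*} [Field K] (α : K) (f : RatFunc K) : Prop :=
  Polynomial.eval α f.denom ≠ 0

/-- `ord_α f ≥ m` : the valuation of `f` at `α` (as a Laurent series in `x − α`)
is at least `m`. -/
def ordGe {K : Type*} [Field K] (α : K) (m : ℤ) (f : RatFunc K) : Prop :=
  regAt α ((RatFunc.X - RatFunc.C α) ^ (-m) * f)

/-- `f` has degree (order at infinity, negated) at most `m`, i.e. `ord_∞ f ≥ −m`. -/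
def degLe {K : Type*} [Field K] (m : ℤ) (f : RatFunc K) : Prop :=
  f = 0 ∨ RatFunc.intDegree f ≤ m

namespace HRaux
variable {K : Type*} [Field K]

local notation "am" => algebraMap K[X] (RatFunc K)

lemma am_inj : Function.Injective (algebraMap K[X] (RatFunc K)) := RatFunc.algebraMap_injective K

lemma am_ne_zero {q : K[X]} (hq : q ≠ 0) : am q ≠ 0 := fun h => hq (am_inj (by simpa using h))

lemma div_eq_div_iff' {p q p' q' : K[X]} (hq : q ≠ 0) (hq' : q' ≠ 0) :
    am p / am q = am p' / am q' ↔ p * q' = p' * q := by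
  rw [div_eq_div_iff (am_ne_zero hq) (am_ne_zero hq'), ← map_mul, ← map_mul]
  exact am_inj.eq_iff

/-- The linear factor as a rational function. -/
lemma X_sub_C_eq (α : K) : RatFunc.X - RatFunc.C α = am (X - C α) := by
  rw [map_sub, RatFunc.algebraMap_X, RatFunc.algebraMap_C]

lemma u_ne_zero (α : K) : RatFunc.X - RatFunc.C α ≠ 0 := by
  rw [X_sub_C_eq]; exact am_ne_zero (X_sub_C_ne_zero α)

lemma regAt_iff {α : K} {f : RatFunc K} :
    regAt α f ↔ ∃ p q : K[X], eval α q ≠ 0 ∧ f = am p / am q := by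
  constructor
  · intro h
    exact ⟨f.num, f.denom, h, (RatFunc.num_div_denom f).symm⟩
  · rintro ⟨p, q, hq, rfl⟩
    have hq0 : q ≠ 0 := fun h => hq (by simp [h])
    have h1 : (am p / am q).num * q = p * (am p / am q).denom := by
      have := RatFunc.num_div_denom (am p / am q)
      rw [div_eq_div_iff' (RatFunc.denom_ne_zero _) hq0] at this
      exact this
    intro hd
    have h2 : eval α ((am p / am q).num) * eval α q = eval α p * eval α ((am p / am q).denom) := by
      have := congrArg (eval α) h1; simpa using this
    rw [hd, mul_zero] at h2
    have hnum : eval α ((am p / am q).num) = 0 := by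
      rcases mul_eq_zero.mp h2 with h | h
      · exact h
      · exact absurd h hq
    obtain ⟨a, b, hab⟩ := RatFunc.isCoprime_num_denom (am p / am q)
    have h3 := congrArg (eval α) hab
    rw [eval_add, eval_mul, eval_mul, hnum, hd, mul_zero, mul_zero, eval_one] at h3
    simp at h3

lemma mul_zpow_eq_iff {α : K} {m : ℤ} {f g : RatFunc K} :
    (RatFunc.X - RatFunc.C α) ^ (-m) * f = g ↔ f = (RatFunc.X - RatFunc.C α) ^ m * g := by
  rw [zpow_neg, inv_mul_eq_iff_eq_mul₀ (zpow_ne_zero _ (u_ne_zero α))]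

lemma ordGe_iff {α : K} {m : ℤ} {f : RatFunc K} :
    ordGe α m f ↔ ∃ p q : K[X], eval α q ≠ 0 ∧
      f = (RatFunc.X - RatFunc.C α) ^ m * (am p / am q) := by
  unfold ordGe
  rw [regAt_iff]
  constructor
  · rintro ⟨p, q, hq, h⟩
    exact ⟨p, q, hq, mul_zpow_eq_iff.mp h⟩
  · rintro ⟨p, q, hq, h⟩
    exact ⟨p, q, hq, mul_zpow_eq_iff.mpr h⟩

lemma ordGe_zero' (α : K) (m : ℤ) : ordGe α m (0 : RatFunc K) :=
  ordGe_iff.mpr ⟨0, 1, by simp, by simp⟩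

lemma ordGe_add {α : K} {m : ℤ} {f g : RatFunc K} (hf : ordGe α m f) (hg : ordGe α m g) :
    ordGe α m (f + g) := by
  obtain ⟨p, q, hq, rfl⟩ := ordGe_iff.mp hf
  obtain ⟨p', q', hq', rfl⟩ := ordGe_iff.mp hg
  have hq0 : q ≠ 0 := fun h => hq (by simp [h])
  have hq0' : q' ≠ 0 := fun h => hq' (by simp [h])
  refine ordGe_iff.mpr ⟨p * q' + p' * q, q * q', by simp [hq, hq'], ?_⟩
  rw [← mul_add, div_add_div _ _ (am_ne_zero hq0) (am_ne_zero hq0')]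
  push_cast [map_mul, map_add]
  ring

lemma ordGe_smul {α : K} {m : ℤ} {f : RatFunc K} (c : K) (hf : ordGe α m f) :
    ordGe α m (c • f) := by
  obtain ⟨p, q, hq, rfl⟩ := ordGe_iff.mp hf
  refine ordGe_iff.mpr ⟨C c * p, q, hq, ?_⟩
  rw [RatFunc.smul_eq_C_mul, map_mul, RatFunc.algebraMap_C, mul_div_assoc]
  ring

lemma ordGe_neg {α : K} {m : ℤ} {f : RatFunc K} (hf : ordGe α m f) : ordGe α m (-f) := by
  simpa using ordGe_smul (-1) hf

lemma ordGe_sub {α : K} {m : ℤ} {f g : RatFunc K} (hf : ordGe α m f) (hg : ordGe α m g) :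
    ordGe α m (f - g) := by
  simpa [sub_eq_add_neg] using ordGe_add hf (ordGe_neg hg)

lemma u_zpow_nonneg {k : ℤ} (hk : 0 ≤ k) (α : K) :
    (RatFunc.X - RatFunc.C α) ^ k = am ((X - C α) ^ k.toNat) := by
  conv_lhs => rw [← Int.toNat_of_nonneg hk]
  rw [zpow_natCast, map_pow, X_sub_C_eq]

lemma ordGe_mono {α : K} {m m' : ℤ} {f : RatFunc K} (h : m' ≤ m) (hf : ordGe α m f) :
    ordGe α m' f := by
  obtain ⟨p, q, hq, rfl⟩ := ordGe_iff.mp hf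
  refine ordGe_iff.mpr ⟨(X - C α) ^ (m - m').toNat * p, q, hq, ?_⟩
  rw [map_mul, ← u_zpow_nonneg (by omega) α, mul_div_assoc]
  rw [show m = m' + (m - m') by ring, zpow_add₀ (u_ne_zero α)]
  ring

lemma ordGe_sum {α : K} {m : ℤ} {ι : Type*} {t : Finset ι} {f : ι → RatFunc K}
    (h : ∀ i ∈ t, ordGe α m (f i)) : ordGe α m (∑ i ∈ t, f i) := by
  classical
  induction t using Finset.induction_on with
  | empty => simpa using ordGe_zero' α m
  | insert _ _ hx ih =>
    rw [Finset.sum_insert hx]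
    exact ordGe_add (h _ (Finset.mem_insert_self _ _))
      (ih fun i hi => h i (Finset.mem_insert_of_mem hi))

lemma ordGe_smul_mul_zpow {α : K} {m k : ℤ} (hmk : m ≤ k) (c : K) (w : K[X]) :
    ordGe α m (c • (am w * (RatFunc.X - RatFunc.C α) ^ k)) := by
  refine ordGe_iff.mpr ⟨C c * w * (X - C α) ^ (k - m).toNat, 1, by simp, ?_⟩
  rw [map_mul, map_mul, ← u_zpow_nonneg (by omega) α, map_one, div_one,
    RatFunc.smul_eq_C_mul, ← RatFunc.algebraMap_C]
  rw [show k = m + (k - m) by ring, zpow_add₀ (u_ne_zero α)]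
  ring

lemma ordGe_zpow {α : K} {m k : ℤ} (hmk : m ≤ k) :
    ordGe α m ((RatFunc.X - RatFunc.C α) ^ k) := by
  simpa [map_one] using ordGe_smul_mul_zpow (α := α) hmk (1:K) (1:K[X])

lemma ordGe_poly {α : K} {m : ℤ} (hm : m ≤ 0) (w : K[X]) : ordGe α m (am w) := by
  simpa [map_one] using ordGe_smul_mul_zpow (α := α) hm (1:K) w

lemma not_ordGe {α : K} {k : ℤ} {c : K} {w : K[X]} (hc : c ≠ 0) (hw : eval α w ≠ 0) :
    ¬ ordGe α (k + 1) (c • (am w * (RatFunc.X - RatFunc.C α) ^ k)) := by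
  intro h
  obtain ⟨p, q, hq, hrep⟩ := ordGe_iff.mp h
  have hq0 : q ≠ 0 := fun h => hq (by simp [h])
  rw [RatFunc.smul_eq_C_mul, ← RatFunc.algebraMap_C, zpow_add₀ (u_ne_zero α), zpow_one] at hrep
  have huk : (RatFunc.X - RatFunc.C α) ^ k ≠ 0 := zpow_ne_zero _ (u_ne_zero α)
  have h3 : (RatFunc.X - RatFunc.C α) ^ k * (am (C c * w)) =
      (RatFunc.X - RatFunc.C α) ^ k * ((RatFunc.X - RatFunc.C α) * (am p / am q)) := by
    rw [map_mul]; linear_combination hrep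
  have h2 := mul_left_cancel₀ huk h3
  rw [X_sub_C_eq, mul_div_assoc' , ← map_mul] at h2
  have h4 : C c * w * q = (X - C α) * p * 1 := by
    refine (div_eq_div_iff' one_ne_zero hq0).mp ?_
    rw [map_one, div_one, h2]
  have h5 := congrArg (eval α) h4
  simp only [eval_mul, eval_sub, eval_X, eval_C, eval_one, sub_self, zero_mul, mul_one] at h5
  exact (mul_ne_zero (mul_ne_zero hc hw) hq) h5

lemma ratDeriv_repr {p q : K[X]} (hq : q ≠ 0) {f : RatFunc K} (hf : f = am p / am q) :
    ratDeriv f = am (derivative p * q - p * derivative q) / am (q ^ 2) := by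
  have h1 : f.num * q = p * f.denom := by
    refine (div_eq_div_iff' (RatFunc.denom_ne_zero f) hq).mp ?_
    rw [RatFunc.num_div_denom, hf]
  have h2 := congrArg derivative h1
  rw [derivative_mul, derivative_mul] at h2
  unfold ratDeriv
  rw [← map_mul, ← map_mul, ← map_sub]
  refine (div_eq_div_iff' (pow_ne_zero 2 (RatFunc.denom_ne_zero f)) (pow_ne_zero 2 hq)).mpr ?_
  linear_combination (f.denom * q) * h2 -
    (derivative f.denom * q + f.denom * derivative q) * h1

lemma smul_zpow_neg_repr (α c : K) (n : ℕ) :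
    c • (RatFunc.X - RatFunc.C α) ^ (-(n:ℤ)) = am (C c) / am ((X - C α) ^ n) := by
  rw [RatFunc.smul_eq_C_mul, ← RatFunc.algebraMap_C, zpow_neg, zpow_natCast,
    map_pow, X_sub_C_eq, div_eq_mul_inv]

lemma smul_zpow_nonneg_repr (α c : K) {k : ℤ} (hk : 0 ≤ k) :
    c • (RatFunc.X - RatFunc.C α) ^ k = am (C c * (X - C α) ^ k.toNat) / am 1 := by
  rw [RatFunc.smul_eq_C_mul, ← RatFunc.algebraMap_C, u_zpow_nonneg hk, map_one, div_one,
    ← map_mul]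

lemma ratDeriv_zero : ratDeriv (0 : RatFunc K) = 0 := by
  unfold ratDeriv; simp

lemma ratDeriv_smul_zpow (α c : K) (k : ℤ) :
    ratDeriv (c • (RatFunc.X - RatFunc.C α) ^ k)
      = (c * (k : K)) • (RatFunc.X - RatFunc.C α) ^ (k - 1) := by
  rcases lt_trichotomy k 0 with hk | hk | hk
  · obtain ⟨n, rfl⟩ : ∃ n : ℕ, k = -(n + 1 : ℕ) := ⟨(-k - 1).toNat, by omega⟩
    have hrep := smul_zpow_neg_repr α c (n + 1)
    rw [ratDeriv_repr (pow_ne_zero _ (X_sub_C_ne_zero α)) hrep]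
    have hrep2 := smul_zpow_neg_repr α (c * ((-(n + 1 : ℕ) : ℤ) : K)) (n + 2)
    rw [show (-((n+1:ℕ):ℤ)) - 1 = -((n+2:ℕ):ℤ) by push_cast; ring, hrep2]
    refine (div_eq_div_iff' (pow_ne_zero _ (pow_ne_zero _ (X_sub_C_ne_zero α)))
      (pow_ne_zero _ (X_sub_C_ne_zero α))).mpr ?_
    rw [derivative_C, derivative_pow, derivative_X_sub_C]
    simp only [C_sub, C_neg, C_mul, C_add, C_1, C_eq_natCast, C_eq_intCast, Int.cast_neg,
      Int.cast_natCast]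
    push_cast
    ring
  · subst hk
    have hrep := smul_zpow_nonneg_repr α c (le_refl (0:ℤ))
    rw [ratDeriv_repr one_ne_zero hrep]
    simp [derivative_C]
  · have hrep := smul_zpow_nonneg_repr α c hk.le
    rw [ratDeriv_repr one_ne_zero hrep]
    have hrep2 := smul_zpow_nonneg_repr α (c * (k : K)) (by omega : (0:ℤ) ≤ k - 1)
    rw [hrep2]
    refine (div_eq_div_iff' (pow_ne_zero 2 one_ne_zero) one_ne_zero).mpr ?_
    obtain ⟨n, hn⟩ : ∃ n : ℕ, k = (n + 1 : ℕ) := ⟨(k - 1).toNat, by omega⟩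
    subst hn
    rw [show ((n+1:ℕ) : ℤ).toNat = n + 1 by omega, show ((n+1:ℕ) : ℤ) - 1 = (n:ℕ) by omega,
      show ((n:ℕ) : ℤ).toNat = n from rfl]
    rw [derivative_mul, derivative_C, derivative_pow, derivative_X_sub_C]
    simp only [derivative_one, C_sub, C_neg, C_mul, C_add, C_1, C_eq_natCast, C_eq_intCast,
      Int.cast_natCast, mul_zero, zero_mul, mul_one]
    push_cast
    ring

lemma iter_ratDeriv (α : K) (k : ℤ) (i : ℕ) :
    ratDeriv^[i] ((RatFunc.X - RatFunc.C α) ^ k)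
      = (∏ j ∈ Finset.range i, ((k : K) - (j : K))) • (RatFunc.X - RatFunc.C α) ^ (k - i) := by
  induction i with
  | zero => simp
  | succ i ih =>
    rw [Function.iterate_succ_apply', ih, ratDeriv_smul_zpow, Finset.prod_range_succ]
    congr 1
    · push_cast; ring
    · push_cast; ring

/-- falling-factorial-type product -/
noncomputable def cc (x : K) (i : ℕ) : K := ∏ j ∈ Finset.range i, (x - (j : K))

lemma applyOp_zpow (r : ℕ) (p : ℕ → K[X]) (α : K) (k : ℤ) :
    applyOp r p ((RatFunc.X - RatFunc.C α) ^ k)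
      = ∑ i ∈ Finset.range (r + 1),
          cc ((k : ℤ) : K) i • (am (p i) * (RatFunc.X - RatFunc.C α) ^ (k - i)) := by
  unfold applyOp
  refine Finset.sum_congr rfl fun i _ => ?_
  rw [iter_ratDeriv, mul_smul_comm]
  rfl

lemma cc_ne_zero [CharZero K] {k : ℤ} (hk : k < 0) (i : ℕ) : cc ((k : ℤ) : K) i ≠ 0 := by
  refine Finset.prod_ne_zero_iff.mpr fun j _ => ?_
  have : ((k - j : ℤ) : K) ≠ 0 := by
    rw [Int.cast_ne_zero]; omega
  push_cast at this ⊢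
  convert this using 1
lemma cc_eq_zero [CharZero K] {k : ℤ} (hk0 : 0 ≤ k) {i : ℕ} (hki : k < i) :
    cc ((k : ℤ) : K) i = 0 := by
  refine Finset.prod_eq_zero (Finset.mem_range.mpr (show k.toNat < i by omega)) ?_
  rw [sub_eq_zero]
  norm_cast
  omega

lemma ordGe_zero_iff {α : K} {f : RatFunc K} : ordGe α 0 f ↔ regAt α f := by
  unfold ordGe; rw [neg_zero, zpow_zero, one_mul]

lemma regAt_am (β : K) (q : K[X]) : regAt β (am q) := by
  rw [← ordGe_zero_iff] at *
  exact ordGe_poly le_rfl q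

lemma u_zpow_repr (α : K) (k : ℤ) :
    (RatFunc.X - RatFunc.C α) ^ k
      = am ((X - C α) ^ k.toNat) / am ((X - C α) ^ (-k).toNat) := by
  rcases le_or_gt 0 k with hk | hk
  · rw [u_zpow_nonneg hk, show (-k).toNat = 0 by omega, pow_zero, map_one, div_one]
  · have h1 : (RatFunc.X - RatFunc.C α) ^ k
        = ((RatFunc.X - RatFunc.C α) ^ ((-k).toNat : ℕ))⁻¹ := by
      rw [← zpow_natCast, ← zpow_neg, show -(((-k).toNat : ℕ) : ℤ) = k by omega]
    rw [h1, show k.toNat = 0 by omega, pow_zero, map_one, X_sub_C_eq, ← map_pow, one_div]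

lemma ordGe_ne {α β : K} (hβ : β ≠ α) (c : K) (w : K[X]) (k : ℤ) :
    ordGe β 0 (c • (am w * (RatFunc.X - RatFunc.C α) ^ k)) := by
  refine ordGe_iff.mpr ⟨C c * w * (X - C α) ^ k.toNat, (X - C α) ^ (-k).toNat, ?_, ?_⟩
  · simp only [eval_pow, eval_sub, eval_X, eval_C]
    exact pow_ne_zero _ (sub_ne_zero.mpr hβ)
  · rw [zpow_zero, one_mul, u_zpow_repr α k, RatFunc.smul_eq_C_mul, ← RatFunc.algebraMap_C,
      map_mul, map_mul]
    ring

/-- degLe toolkit -/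
lemma degLe_zero' (m : ℤ) : degLe m (0 : RatFunc K) := Or.inl rfl

lemma degLe_add {m : ℤ} {f g : RatFunc K} (hf : degLe m f) (hg : degLe m g) :
    degLe m (f + g) := by
  rcases hf with rfl | hf
  · simpa using hg
  rcases hg with rfl | hg
  · rw [add_zero]; exact Or.inr hf
  by_cases h0 : f + g = 0
  · exact Or.inl h0
  · refine Or.inr ?_
    by_cases hg0 : g = 0
    · simp [hg0, hf]
    · exact le_trans (RatFunc.intDegree_add_le hg0 h0) (by omega)

lemma intDegree_smul {c : K} (hc : c ≠ 0) (f : RatFunc K) :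
    (c • f).intDegree = f.intDegree := by
  by_cases hf : f = 0
  · simp [hf]
  rw [RatFunc.smul_eq_C_mul, RatFunc.intDegree_mul (by rw [← RatFunc.algebraMap_C]; exact am_ne_zero (by simpa using hc)) hf,
    RatFunc.intDegree_C, zero_add]

lemma degLe_smul {m : ℤ} (c : K) {f : RatFunc K} (hf : degLe m f) : degLe m (c • f) := by
  by_cases hc : c = 0
  · simp [hc, degLe_zero']
  rcases hf with rfl | hf
  · simp [degLe_zero']
  by_cases hf0 : f = 0
  · simp [hf0, degLe_zero']
  exact Or.inr (by rwa [intDegree_smul hc])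

lemma degLe_neg {m : ℤ} {f : RatFunc K} (hf : degLe m f) : degLe m (-f) := by
  simpa using degLe_smul (-1) hf

lemma degLe_sub {m : ℤ} {f g : RatFunc K} (hf : degLe m f) (hg : degLe m g) :
    degLe m (f - g) := by
  simpa [sub_eq_add_neg] using degLe_add hf (degLe_neg hg)

lemma degLe_mono {m m' : ℤ} (h : m ≤ m') {f : RatFunc K} (hf : degLe m f) : degLe m' f := by
  rcases hf with rfl | hf
  · exact degLe_zero' m'
  · exact Or.inr (le_trans hf h)

lemma degLe_am_iff {m : ℤ} {D : K[X]} :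
    degLe m (am D) ↔ D = 0 ∨ (D.natDegree : ℤ) ≤ m := by
  unfold degLe
  rw [RatFunc.intDegree_polynomial]
  constructor
  · rintro (h | h)
    · exact Or.inl (am_inj (by simpa using h))
    · exact Or.inr h
  · rintro (rfl | h)
    · exact Or.inl (map_zero _)
    · exact Or.inr h

lemma intDegree_X_zpow (k : ℤ) : (RatFunc.X ^ k : RatFunc K).intDegree = k := by
  have hX : (RatFunc.X : RatFunc K) ≠ 0 := by
    rw [← RatFunc.algebraMap_X]; exact am_ne_zero X_ne_zero
  rcases le_or_gt 0 k with hk | hk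
  · conv_lhs => rw [show k = (k.toNat : ℤ) by omega]
    rw [zpow_natCast, ← RatFunc.algebraMap_X (K := K), ← map_pow,
      RatFunc.intDegree_polynomial]
    simp; omega
  · have h1 : (RatFunc.X ^ k : RatFunc K) * RatFunc.X ^ (-k) = 1 := by
      rw [← zpow_add₀ hX]; simp
    have h2 := RatFunc.intDegree_mul (zpow_ne_zero k hX) (zpow_ne_zero (-k) hX)
    rw [h1, RatFunc.intDegree_one] at h2
    have h3 : (RatFunc.X ^ (-k) : RatFunc K).intDegree = -k := by
      conv_lhs => rw [show -k = ((-k).toNat : ℤ) by omega]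
      rw [zpow_natCast, ← RatFunc.algebraMap_X (K := K), ← map_pow,
        RatFunc.intDegree_polynomial]
      simp; omega
    omega

lemma eq_zero_of_regAt_all [IsAlgClosed K] {f : RatFunc K}
    (h : ∀ β, regAt β f) (hd : degLe (-1) f) : f = 0 := by
  by_contra hf
  rcases hd with rfl | hd
  · exact hf rfl
  have hnum : f.num ≠ 0 := RatFunc.num_ne_zero hf
  have hdeg : f.denom.natDegree ≠ 0 := by
    rw [RatFunc.intDegree] at hd
    omega
  obtain ⟨β, hβ⟩ := IsAlgClosed.exists_root f.denom (by
    rw [Polynomial.degree_eq_natDegree (RatFunc.denom_ne_zero f)]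
    exact_mod_cast hdeg)
  exact h β hβ

/-- generic "indicial polynomial" shape -/
noncomputable def braket (n : ℕ) (g : ℕ → K) : K[X] :=
  ∑ i ∈ Finset.range n, C (g i) * ∏ j ∈ Finset.range i, (X - C (j : K))

lemma eval_braket (n : ℕ) (g : ℕ → K) (x : K) :
    eval x (braket n g) = ∑ i ∈ Finset.range n, g i * cc x i := by
  unfold braket cc
  rw [eval_finset_sum]
  refine Finset.sum_congr rfl fun i _ => ?_
  rw [eval_mul, eval_C, eval_prod]
  simp

lemma braket_ne_zero {n : ℕ} {g : ℕ → K} (h : ∃ i ∈ Finset.range n, g i ≠ 0) :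
    braket n g ≠ 0 := by
  classical
  set F := (Finset.range n).filter (fun i => g i ≠ 0) with hF
  have hFne : F.Nonempty := by
    obtain ⟨i, hi, hgi⟩ := h
    exact ⟨i, Finset.mem_filter.mpr ⟨hi, hgi⟩⟩
  set i₀ := F.max' hFne with hi₀
  have hi₀F : i₀ ∈ F := F.max'_mem hFne
  have hi₀n : i₀ ∈ Finset.range n := (Finset.mem_filter.mp hi₀F).1
  have hgi₀ : g i₀ ≠ 0 := (Finset.mem_filter.mp hi₀F).2
  have hmono : ∀ i : ℕ, (∏ j ∈ Finset.range i, (X - C (j : K))).Monic :=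
    fun i => monic_prod_of_monic _ _ fun j _ => monic_X_sub_C _
  have hdeg : ∀ i : ℕ, (∏ j ∈ Finset.range i, (X - C (j : K))).natDegree = i := by
    intro i
    have h2 := natDegree_prod (Finset.range i) (fun j => (X - C (j:K)))
      (fun j _ => (monic_X_sub_C (j:K)).ne_zero)
    rw [h2]
    simp only [natDegree_X_sub_C]
    rw [Finset.sum_const, smul_eq_mul, mul_one, Finset.card_range]
  intro hzero
  have hcoeff : (braket n g).coeff i₀ = g i₀ := by
    unfold braket
    rw [finset_sum_coeff]
    rw [Finset.sum_eq_single i₀]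
    · have hc2 : (∏ j ∈ Finset.range i₀, (X - C (j:K))).coeff i₀ = 1 := by
        have := Monic.coeff_natDegree (hmono i₀)
        rwa [hdeg i₀] at this
      rw [coeff_C_mul, hc2, mul_one]
    · intro i hi hne
      rcases eq_or_ne (g i) 0 with hgi | hgi
      · simp [hgi]
      · have hiF : i ∈ F := Finset.mem_filter.mpr ⟨hi, hgi⟩
        have hile : i ≤ i₀ := F.le_max' i hiF
        have hilt : i < i₀ := lt_of_le_of_ne hile hne
        rw [coeff_C_mul, coeff_eq_zero_of_natDegree_lt (by rw [hdeg i]; exact hilt), mul_zero]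
    · intro hni₀
      exact absurd hi₀n hni₀
  rw [hzero, coeff_zero] at hcoeff
  exact hgi₀ hcoeff.symm

/-- the polynomial part of `M(x^s)` -/
noncomputable def Qpoly (r : ℕ) (p : ℕ → K[X]) (s : ℤ) : K[X] :=
  ∑ i ∈ Finset.range (r + 1),
    if (i : ℤ) ≤ s then p i * C (cc ((s : ℤ) : K) i) * X ^ (s - i).toNat else 0

lemma X_zpow_eq (s : ℤ) : (RatFunc.X : RatFunc K) ^ s
    = (RatFunc.X - RatFunc.C (0 : K)) ^ s := by
  rw [map_zero, sub_zero]

lemma applyOp_X_zpow [CharZero K] (r : ℕ) (p : ℕ → K[X]) {s : ℤ} (hs : 0 ≤ s) :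
    applyOp r p ((RatFunc.X : RatFunc K) ^ s) = am (Qpoly r p s) := by
  rw [X_zpow_eq, applyOp_zpow]
  unfold Qpoly
  rw [map_sum]
  refine Finset.sum_congr rfl fun i _ => ?_
  by_cases hi : (i : ℤ) ≤ s
  · rw [if_pos hi, ← mul_smul_comm, RatFunc.smul_eq_C_mul, ← RatFunc.algebraMap_C,
      u_zpow_nonneg (by omega : (0:ℤ) ≤ s - i) 0, C_0, sub_zero, ← map_mul, ← map_mul,
      ← mul_assoc]
  · rw [if_neg hi, cc_eq_zero hs (by omega), zero_smul, map_zero]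

open Classical in
noncomputable def gA (r : ℕ) (p : ℕ → K[X]) (α : K) (σ : ℤ) : ℕ → K := fun i =>
  if p i ≠ 0 ∧ (rootMultiplicity α (p i) : ℤ) - i = σ
  then eval α (p i /ₘ (X - C α) ^ rootMultiplicity α (p i)) else 0

lemma u_pow_nat (α : K) (m : ℕ) :
    (RatFunc.X - RatFunc.C α) ^ (m : ℤ) = am ((X - C α) ^ m) := by
  rw [u_zpow_nonneg (by positivity) α, Int.toNat_natCast]

lemma chiA_ordGe (r : ℕ) (p : ℕ → K[X]) (α : K) (σ : ℤ) (s : ℤ)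
    (hlb : ∀ i, i ≤ r → p i ≠ 0 → σ ≤ (rootMultiplicity α (p i) : ℤ) - i) :
    ordGe α (σ - s + 1)
      (applyOp r p ((RatFunc.X - RatFunc.C α) ^ (-s))
        - (eval ((-s : ℤ) : K) (braket (r + 1) (gA r p α σ)))
            • (RatFunc.X - RatFunc.C α) ^ (σ - s)) := by
  rw [applyOp_zpow, eval_braket, Finset.sum_smul, ← Finset.sum_sub_distrib]
  apply ordGe_sum
  intro i hi
  have hir : i ≤ r := by have := Finset.mem_range.mp hi; omega
  by_cases hp : p i = 0
  · have hg : gA r p α σ i = 0 := by simp [gA, hp]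
    rw [hg, hp, map_zero, zero_mul, smul_zero, zero_mul, zero_smul, sub_zero]
    exact ordGe_zero' _ _
  · set m := rootMultiplicity α (p i) with hm
    have hfact : (X - C α) ^ m * (p i /ₘ (X - C α) ^ m) = p i :=
      pow_mul_divByMonic_rootMultiplicity_eq _ _
    set w := p i /ₘ (X - C α) ^ m with hw
    have h1 : am (p i) * (RatFunc.X - RatFunc.C α) ^ (-s - i)
        = am w * (RatFunc.X - RatFunc.C α) ^ ((m : ℤ) - i - s) := by
      rw [← hfact, map_mul, ← u_pow_nat α m, mul_comm (_ ^ (m:ℤ)) (am w), mul_assoc,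
        ← zpow_add₀ (u_ne_zero α)]
      congr 1
      ring
    rw [h1]
    by_cases hcond : (m : ℤ) - i = σ
    · have hg : gA r p α σ i = eval α w := by simp [gA, hp, ← hm, hcond, hw]
      rw [hg, hcond]
      have hsplit : cc ((-s : ℤ) : K) i • (am w * (RatFunc.X - RatFunc.C α) ^ (σ - s))
            - (eval α w * cc ((-s : ℤ) : K) i) • (RatFunc.X - RatFunc.C α) ^ (σ - s)
          = cc ((-s : ℤ) : K) i •
              (am (w - C (eval α w)) * (RatFunc.X - RatFunc.C α) ^ (σ - s)) := by
        rw [map_sub, sub_mul, smul_sub]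
        congr 1
        rw [mul_comm (eval α w) _, mul_smul, RatFunc.smul_eq_C_mul (eval α w),
          ← RatFunc.algebraMap_C]
      rw [hsplit]
      have hroot : IsRoot (w - C (eval α w)) α := by simp [IsRoot]
      obtain ⟨v, hv⟩ := (dvd_iff_isRoot).mpr hroot
      have hz : (RatFunc.X - RatFunc.C α) ^ (σ - s + 1)
          = (RatFunc.X - RatFunc.C α) ^ (σ - s) * (RatFunc.X - RatFunc.C α) := by
        rw [zpow_add₀ (u_ne_zero α), zpow_one]
      have heq : am ((X - C α) * v) * (RatFunc.X - RatFunc.C α) ^ (σ - s)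
          = am v * (RatFunc.X - RatFunc.C α) ^ (σ - s + 1) := by
        rw [map_mul, ← X_sub_C_eq, hz]; ring
      rw [hv, heq]
      exact ordGe_smul_mul_zpow (by omega) _ _
    · have hg : gA r p α σ i = 0 := by
        simp only [gA, ← hm, ite_eq_right_iff, and_imp]
        intro _ h2
        exact absurd h2 hcond
      rw [hg, zero_mul, zero_smul, sub_zero]
      have hle : σ ≤ (m : ℤ) - i := hlb i hir hp
      exact ordGe_smul_mul_zpow (by omega) _ _

lemma leading_unique {α : K} {t : ℤ} {f : RatFunc K} {c d : K}
    (h1 : ordGe α (t + 1) (f - c • (RatFunc.X - RatFunc.C α) ^ t))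
    (h2 : ordGe α (t + 1) (f - d • (RatFunc.X - RatFunc.C α) ^ t)) : c = d := by
  by_contra hne
  have h3 : ordGe α (t + 1) ((c - d) • (am (1:K[X]) * (RatFunc.X - RatFunc.C α) ^ t)) := by
    have h4 := ordGe_sub h2 h1
    have h5 : (f - d • (RatFunc.X - RatFunc.C α) ^ t)
        - (f - c • (RatFunc.X - RatFunc.C α) ^ t)
        = (c - d) • (am (1:K[X]) * (RatFunc.X - RatFunc.C α) ^ t) := by
      rw [map_one, one_mul, sub_smul]
      ring
    rwa [h5] at h4
  exact not_ordGe (sub_ne_zero.mpr hne) (by simp) h3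

lemma sigma_nonroot {r : ℕ} {p : ℕ → K[X]} {α : K} {σ : ℤ}
    (hσ : IsLeast {m : ℤ | ∃ i ≤ r, p i ≠ 0 ∧
        m = (Polynomial.rootMultiplicity α (p i) : ℤ) - i} σ)
    (hpr : eval α (p r) ≠ 0) : σ = -(r : ℤ) := by
  have hne : p r ≠ 0 := fun h => hpr (by simp [h])
  have hm0 : rootMultiplicity α (p r) = 0 := by
    rw [Polynomial.rootMultiplicity_eq_zero_iff]
    intro h
    exact absurd h hpr
  have h1 : σ ≤ -(r : ℤ) := hσ.2 ⟨r, le_rfl, hne, by rw [hm0]; simp⟩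
  obtain ⟨i, hir, hpi, hval⟩ := hσ.1
  have : (0 : ℤ) ≤ (rootMultiplicity α (p i) : ℤ) := by positivity
  omega

lemma chi_nonroot_ne_zero [CharZero K] {r : ℕ} {p : ℕ → K[X]} {α : K}
    (hpr : eval α (p r) ≠ 0) {s : ℤ} (hs : 0 < s) :
    eval ((-s : ℤ) : K) (braket (r + 1) (gA r p α (-(r : ℤ)))) ≠ 0 := by
  have hne : p r ≠ 0 := fun h => hpr (by simp [h])
  have hm0 : rootMultiplicity α (p r) = 0 := by
    rw [Polynomial.rootMultiplicity_eq_zero_iff]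
    intro h
    exact absurd h hpr
  rw [eval_braket]
  rw [Finset.sum_eq_single r]
  · have hg : gA r p α (-(r:ℤ)) r = eval α (p r) := by
      simp [gA, hne, hm0, Polynomial.divByMonic_one]
    rw [hg]
    exact mul_ne_zero hpr (cc_ne_zero (by omega) r)
  · intro i hi hir
    have hir : i ≤ r := by have := Finset.mem_range.mp hi; omega
    have hg : gA r p α (-(r:ℤ)) i = 0 := by
      simp only [gA, ite_eq_right_iff, and_imp]
      intro hpi hval
      have h0 : (0 : ℤ) ≤ (rootMultiplicity α (p i) : ℤ) := by positivity
      omega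
    rw [hg, zero_mul]
  · intro h
    exact absurd (Finset.self_mem_range_succ r) h

open Classical in
/-- ψ coefficients at infinity -/
noncomputable def gPsi (r : ℕ) (p : ℕ → K[X]) (σ : ℤ) : ℕ → K := fun i =>
  if σ ≤ (i : ℤ) then (p i).coeff ((i : ℤ) - σ).toNat else 0

lemma coeff_Qpoly (r : ℕ) (p : ℕ → K[X]) {s σ : ℤ} (hr : (r : ℤ) < s) (hσ : σ ≤ s) :
    (Qpoly r p s).coeff (s - σ).toNat
      = eval ((s : ℤ) : K) (braket (r + 1) (gPsi r p σ)) := by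
  rw [eval_braket]
  unfold Qpoly
  rw [finset_sum_coeff]
  refine Finset.sum_congr rfl fun i hi => ?_
  have hir : i ≤ r := by have := Finset.mem_range.mp hi; omega
  rw [if_pos (by omega : (i : ℤ) ≤ s)]
  rw [coeff_mul_X_pow']
  by_cases hcase : σ ≤ (i : ℤ)
  · rw [if_pos (by omega : (s - i : ℤ).toNat ≤ (s - σ).toNat)]
    rw [coeff_mul_C]
    rw [show (s - σ).toNat - (s - (i:ℤ)).toNat = ((i : ℤ) - σ).toNat by omega]
    rw [gPsi, if_pos hcase]
  · rw [if_neg (by omega : ¬ (s - (i:ℤ)).toNat ≤ (s - σ).toNat)]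
    rw [gPsi, if_neg hcase, zero_mul]

lemma psi_ne_zero {r : ℕ} {p : ℕ → K[X]} {σ : ℤ}
    (h : ∃ i ≤ r, p i ≠ 0 ∧ σ = (i : ℤ) - (p i).natDegree) :
    braket (r + 1) (gPsi r p σ) ≠ 0 := by
  obtain ⟨i, hir, hpi, hval⟩ := h
  refine braket_ne_zero ⟨i, Finset.mem_range.mpr (by omega), ?_⟩
  have hσi : σ ≤ (i : ℤ) := by
    have : (0:ℤ) ≤ ((p i).natDegree : ℤ) := by positivity
    omega
  rw [gPsi, if_pos hσi, show ((i : ℤ) - σ).toNat = (p i).natDegree by omega]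
  exact fun h => hpi (leadingCoeff_eq_zero.mp h)

lemma X_zpow_nonneg {k : ℤ} (hk : 0 ≤ k) :
    (RatFunc.X : RatFunc K) ^ k = am (X ^ k.toNat) := by
  rw [X_zpow_eq, u_zpow_nonneg hk, C_0, sub_zero]

lemma ind_eq_coeff {r : ℕ} {p : ℕ → K[X]} {s σ : ℤ} {ind : K}
    (ht : 0 ≤ s - σ)
    (h : degLe (s - σ - 1) (am (Qpoly r p s) - ind • (RatFunc.X : RatFunc K) ^ (s - σ))) :
    ind = (Qpoly r p s).coeff (s - σ).toNat := by
  rw [X_zpow_nonneg ht, RatFunc.smul_eq_C_mul, ← RatFunc.algebraMap_C, ← map_mul, ← map_sub]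
    at h
  have h2 : (Qpoly r p s - C ind * X ^ (s - σ).toNat).coeff (s - σ).toNat = 0 := by
    rcases degLe_am_iff.mp h with h3 | h3
    · rw [h3, coeff_zero]
    · exact coeff_eq_zero_of_natDegree_lt (by omega)
  rw [coeff_sub, coeff_C_mul, coeff_X_pow, if_pos rfl, mul_one, sub_eq_zero] at h2
  exact h2.symm

lemma ind_zero_small {r : ℕ} {p : ℕ → K[X]} {s σ : ℤ} {ind : K}
    (ht : s - σ < 0)
    (h : degLe (s - σ - 1) (am (Qpoly r p s) - ind • (RatFunc.X : RatFunc K) ^ (s - σ))) :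
    ind = 0 := by
  by_contra hind
  have hX : (RatFunc.X : RatFunc K) ≠ 0 := by
    rw [← RatFunc.algebraMap_X]; exact am_ne_zero X_ne_zero
  have hsm : ind • (RatFunc.X : RatFunc K) ^ (s - σ) ≠ 0 :=
    smul_ne_zero hind (zpow_ne_zero _ hX)
  have hd1 : degLe (s - σ) (ind • (RatFunc.X : RatFunc K) ^ (s - σ)) :=
    Or.inr (by rw [intDegree_smul hind, intDegree_X_zpow])
  have hQ : degLe (s - σ) (am (Qpoly r p s)) := by
    have : am (Qpoly r p s) = ind • (RatFunc.X : RatFunc K) ^ (s - σ)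
        + (am (Qpoly r p s) - ind • (RatFunc.X : RatFunc K) ^ (s - σ)) := by ring
    rw [this]
    exact degLe_add hd1 (degLe_mono (by omega) h)
  have hQ0 : Qpoly r p s = 0 := by
    rcases degLe_am_iff.mp hQ with h3 | h3
    · exact h3
    · omega
  rw [hQ0, map_zero, zero_sub] at h
  rcases h with h | h
  · exact hsm (neg_eq_zero.mp h)
  · rw [show -(ind • (RatFunc.X : RatFunc K) ^ (s - σ)) = (-1 : K) • (ind • (RatFunc.X : RatFunc K) ^ (s - σ)) by simp] at h
    rw [intDegree_smul (by norm_num : (-1:K) ≠ 0), intDegree_smul hind, intDegree_X_zpow] at h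
    omega

/-- monomial generating set -/
def G0 (K : Type*) [Field K] : Set (RatFunc K) :=
  {g : RatFunc K | (∃ s : ℤ, 0 ≤ s ∧ g = RatFunc.X ^ s) ∨
    ∃ (α : K) (s : ℤ), 0 < s ∧ g = (RatFunc.X - RatFunc.C α) ^ (-s)}

lemma poly_mem_span (q : K[X]) : am q ∈ Submodule.span K (G0 K) := by
  induction q using Polynomial.induction_on' with
  | add f g hf hg => rw [map_add]; exact Submodule.add_mem _ hf hg
  | monomial n a =>
    have : am (monomial n a) = a • (RatFunc.X : RatFunc K) ^ (n : ℤ) := by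
      rw [X_zpow_nonneg (by positivity), Int.toNat_natCast, ← C_mul_X_pow_eq_monomial,
        map_mul, RatFunc.algebraMap_C, ← RatFunc.smul_eq_C_mul]
    rw [this]
    exact Submodule.smul_mem _ _ (Submodule.subset_span (Or.inl ⟨n, by positivity, rfl⟩))

lemma span_monomials [IsAlgClosed K] (f : RatFunc K) : f ∈ Submodule.span K (G0 K) := by
  suffices h : ∀ (N : ℕ) (n d : K[X]), d ≠ 0 → d.natDegree ≤ N →
      am n / am d ∈ Submodule.span K (G0 K) by
    have := h f.denom.natDegree f.num f.denom (RatFunc.denom_ne_zero f) le_rfl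
    rwa [RatFunc.num_div_denom] at this
  intro N
  induction N with
  | zero =>
    intro n d hd hdeg
    obtain ⟨a, rfl⟩ : ∃ a, C a = d := ⟨d.coeff 0, (Polynomial.eq_C_of_natDegree_eq_zero
      (Nat.le_zero.mp hdeg)).symm⟩
    have ha : a ≠ 0 := fun h => hd (by rw [h, C_0])
    have : am n / am (C a) = a⁻¹ • am n := by
      rw [RatFunc.algebraMap_C, RatFunc.smul_eq_C_mul, div_eq_mul_inv, mul_comm,
        ← map_inv₀ RatFunc.C]
    rw [this]
    exact Submodule.smul_mem _ _ (poly_mem_span n)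
  | succ N ih =>
    intro n d hd hdeg
    by_cases hcase : d.natDegree ≤ N
    · exact ih n d hd hcase
    have hdeg1 : d.natDegree = N + 1 := by omega
    obtain ⟨α, hroot⟩ := IsAlgClosed.exists_root d (by
      rw [Polynomial.degree_eq_natDegree hd, hdeg1]
      exact_mod_cast Nat.succ_ne_zero N)
    have hm : 0 < rootMultiplicity α d := (rootMultiplicity_pos hd).mpr hroot
    obtain ⟨m', hm'⟩ : ∃ m', rootMultiplicity α d = m' + 1 :=
      ⟨rootMultiplicity α d - 1, by omega⟩
    have hfact : (X - C α) ^ (m' + 1) * (d /ₘ (X - C α) ^ (m' + 1)) = d := by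
      rw [← hm']; exact pow_mul_divByMonic_rootMultiplicity_eq d α
    have hweval : eval α (d /ₘ (X - C α) ^ (m' + 1)) ≠ 0 := by
      rw [← hm']; exact eval_divByMonic_pow_rootMultiplicity_ne_zero α hd
    set w := d /ₘ (X - C α) ^ (m' + 1) with hwdef
    have hwne : w ≠ 0 := fun h => hweval (by rw [h]; simp)
    set c := eval α n / eval α w with hcdef
    have hcw : c * eval α w = eval α n := div_mul_cancel₀ _ hweval
    have hroot2 : IsRoot (n - C c * w) α := by
      simp [IsRoot, hcw]
    obtain ⟨n₁, hn₁⟩ := (dvd_iff_isRoot).mpr hroot2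
    have hdenne : (X - C α) ^ m' * w ≠ 0 :=
      mul_ne_zero (pow_ne_zero _ (X_sub_C_ne_zero α)) hwne
    have hdeg2 : ((X - C α) ^ m' * w).natDegree ≤ N := by
      have h1 : d.natDegree = (m' + 1) + w.natDegree := by
        conv_lhs => rw [← hfact]
        rw [natDegree_mul (pow_ne_zero _ (X_sub_C_ne_zero α)) hwne,
          natDegree_pow, natDegree_X_sub_C, mul_one]
      have h2 : ((X - C α) ^ m' * w).natDegree = m' + w.natDegree := by
        rw [natDegree_mul (pow_ne_zero _ (X_sub_C_ne_zero α)) hwne,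
          natDegree_pow, natDegree_X_sub_C, mul_one]
      omega
    have hmem1 := ih n₁ ((X - C α) ^ m' * w) hdenne hdeg2
    have hkey : am n / am d
        = am n₁ / am ((X - C α) ^ m' * w) + c • (RatFunc.X - RatFunc.C α) ^ (-(m' + 1 : ℕ) : ℤ) := by
      rw [smul_zpow_neg_repr, div_add_div _ _ (am_ne_zero hdenne)
        (am_ne_zero (pow_ne_zero _ (X_sub_C_ne_zero α)))]
      rw [← map_mul, ← map_mul, ← map_mul, ← map_add]
      refine (div_eq_div_iff' hd (mul_ne_zero hdenne
        (pow_ne_zero _ (X_sub_C_ne_zero α)))).mpr ?_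
      conv_rhs => rw [← hfact]
      rw [pow_succ]
      linear_combination ((X - C α) ^ m' * (X - C α) ^ m' * (X - C α) * w) * hn₁
    rw [hkey]
    refine Submodule.add_mem _ hmem1 (Submodule.smul_mem _ _ (Submodule.subset_span
      (Or.inr ⟨α, (m' + 1 : ℕ), by positivity, rfl⟩)))

end HRaux

open HRaux

/-- over an algebraically closed field, the exceptional space
`Exc_M = H(M(K(x)))` is spanned by the finite family
(a) `H(M((x−α)^{−s}))`, `α` a zero of the leading coefficient, `s > 0`, `ind_α(−s) = 0`;
(b) `H(M((x−α)^{−s}))`, `α` a zero of the leading coefficient, `0 < s ≤ σ_α`;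
(c) `H(M(x^s))`, `s ≥ 0`, `ind_∞(−s) = 0`;
in particular it is finite dimensional. -/
theorem exceptional_space_spanned {K : Type*} [Field K] [CharZero K]
    [IsAlgClosed K]
    (M H : RatFunc K →ₗ[K] RatFunc K)
    (r : ℕ) (p : ℕ → K[X]) (hpr : p r ≠ 0)
    (σα : K → ℤ) (σinf : ℤ) (indα : K → ℤ → K) (indinf : ℤ → K)
    -- the shifts of `M` at finite points and at infinity:
    (hσα : ∀ α : K, IsLeast {m : ℤ | ∃ i ≤ r, p i ≠ 0 ∧
        m = (Polynomial.rootMultiplicity α (p i) : ℤ) - i} (σα α))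
    (hσinf : IsGreatest {m : ℤ | ∃ i ≤ r, p i ≠ 0 ∧ m = (i : ℤ) - (p i).natDegree} σinf)
    -- the defining property of the indicial functions:
    -- `M((x−α)^{−s}) = ind_α(−s)(x−α)^{−s+σ_α}(1+o(1))` at `α`,
    (hindα : ∀ (α : K) (s : ℤ),
      ordGe α (-s + σα α + 1)
        (applyOp r p ((RatFunc.X - RatFunc.C α) ^ (-s)) -
          indα α (-s) • (RatFunc.X - RatFunc.C α) ^ (-s + σα α)))
    -- `M(x^s) = ind_∞(−s) x^{s−σ_∞}(1+o(1))` at infinity: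
    (hindinf : ∀ s : ℤ,
      degLe (s - σinf - 1)
        (applyOp r p (RatFunc.X ^ s) - indinf (-s) • RatFunc.X ^ (s - σinf)))
    (Hloc : K → RatFunc K → RatFunc K) (Hinf : RatFunc K → RatFunc K)
    -- the recursive definition of the local reduction `H_α`:
    (hHloc0 : ∀ (α : K) (R : RatFunc K), ordGe α 0 R → Hloc α R = R)
    (hHloc1 : ∀ (α : K) (R : RatFunc K) (c : K) (s : ℤ), 0 < s → c ≠ 0 →
      ordGe α (-s + 1) (R - c • (RatFunc.X - RatFunc.C α) ^ (-s)) →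
      (indα α (-σα α - s) ≠ 0 →
        Hloc α R = Hloc α (R - (c / indα α (-σα α - s)) •
          applyOp r p ((RatFunc.X - RatFunc.C α) ^ (-s - σα α)))) ∧
      (indα α (-σα α - s) = 0 →
        Hloc α R = c • (RatFunc.X - RatFunc.C α) ^ (-s) +
          Hloc α (R - c • (RatFunc.X - RatFunc.C α) ^ (-s))))
    -- the recursive definition of the reduction `H_∞` at infinity:
    (hHinf0 : ∀ R : RatFunc K, degLe (-1) R → Hinf R = R)
    (hHinf1 : ∀ (R : RatFunc K) (c : K) (s : ℤ), 0 ≤ s → c ≠ 0 →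
      degLe (s - 1) (R - c • RatFunc.X ^ s) →
      ((indinf (-s - σinf) ≠ 0 ∧ 0 ≤ s + σinf) →
        Hinf R = Hinf (R - (c / indinf (-s - σinf)) • applyOp r p (RatFunc.X ^ (s + σinf)))) ∧
      (¬ (indinf (-s - σinf) ≠ 0 ∧ 0 ≤ s + σinf) →
        Hinf R = c • RatFunc.X ^ s + Hinf (R - c • RatFunc.X ^ s)))
    -- `H(R) = H_∞(R_{(∞)} + ∑_α H_α(R_{(α)}))` via partial fractions:
    (hH : ∀ R : RatFunc K, ∃ (S : Finset K) (pol : K → RatFunc K) (pinf : RatFunc K),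
      (∃ q : K[X], pinf = algebraMap K[X] (RatFunc K) q) ∧
      (∀ α ∈ S, degLe (-1) (pol α) ∧ ∀ β : K, β ≠ α → ordGe β 0 (pol α)) ∧
      R = pinf + ∑ α ∈ S, pol α ∧
      H R = Hinf (pinf + ∑ α ∈ S, Hloc α (pol α)))
     (hM : ∀ f, M f = applyOp r p f) :
    Submodule.map H (LinearMap.range M) =
      Submodule.span K
        {f : RatFunc K |
          (∃ (α : K) (s : ℤ), Polynomial.eval α (p r) = 0 ∧ 0 < s ∧ indα α (-s) = 0 ∧
            f = H (applyOp r p ((RatFunc.X - RatFunc.C α) ^ (-s)))) ∨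
          (∃ (α : K) (s : ℤ), Polynomial.eval α (p r) = 0 ∧ 0 < s ∧ s ≤ σα α ∧
            f = H (applyOp r p ((RatFunc.X - RatFunc.C α) ^ (-s)))) ∨
          (∃ s : ℤ, 0 ≤ s ∧ indinf (-s) = 0 ∧ f = H (applyOp r p (RatFunc.X ^ s)))} ∧
    FiniteDimensional K (Submodule.map H (LinearMap.range M)) := by
  classical
  have Hloc_zero : ∀ α : K, Hloc α 0 = 0 := fun α => hHloc0 α 0 (ordGe_zero' α 0)
  have Hinf_zero : Hinf 0 = 0 := hHinf0 0 (degLe_zero' _)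
  -- regularity of `M((x-α)^{-s})` away from `α`
  have hAreg : ∀ (α β : K), β ≠ α → ∀ s : ℤ,
      ordGe β 0 (applyOp r p ((RatFunc.X - RatFunc.C α) ^ (-s))) := by
    intro α β hβ s
    rw [applyOp_zpow]
    exact ordGe_sum fun i _ => ordGe_ne hβ _ _ _
  -- collapse of the partial-fraction decomposition when `R` has poles only at `α`
  have hcollapse : ∀ (R : RatFunc K) (α : K), (∀ β, β ≠ α → ordGe β 0 R) →
      ∃ (T : RatFunc K) (pinfq : K[X]), R = algebraMap K[X] (RatFunc K) pinfq + T ∧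
        H R = Hinf (algebraMap K[X] (RatFunc K) pinfq + Hloc α T) ∧
        degLe (-1) T ∧ (∀ γ, γ ≠ α → ordGe γ 0 T) := by
    intro R α hreg
    obtain ⟨S, pol, pinf, ⟨qq, rfl⟩, hprop, hsum, hHval⟩ := hH R
    have hz : ∀ β ∈ S, β ≠ α → pol β = 0 := by
      intro β hβS hβα
      refine eq_zero_of_regAt_all (fun γ => ?_) (hprop β hβS).1
      by_cases hγ : γ = β
      · subst hγ
        have hexp : pol γ = R - algebraMap K[X] (RatFunc K) qq
            - ∑ δ ∈ S.erase γ, pol δ := by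
          rw [hsum, ← Finset.add_sum_erase S pol hβS]
          ring
        rw [← ordGe_zero_iff, hexp]
        refine ordGe_sub (ordGe_sub (hreg γ hβα) (ordGe_poly le_rfl qq)) ?_
        refine ordGe_sum fun δ hδ => ?_
        have hδS := Finset.mem_of_mem_erase hδ
        have hδγ := Finset.ne_of_mem_erase hδ
        exact (hprop δ hδS).2 γ (Ne.symm hδγ)
      · exact ordGe_zero_iff.mp ((hprop β hβS).2 γ hγ)
    refine ⟨if hα : α ∈ S then pol α else 0, qq, ?_, ?_, ?_, ?_⟩
    · rw [hsum]
      congr 1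
      by_cases hα : α ∈ S
      · rw [dif_pos hα]
        exact Finset.sum_eq_single_of_mem α hα (fun β hβ hne => hz β hβ hne)
      · rw [dif_neg hα]
        exact Finset.sum_eq_zero fun β hβ => hz β hβ (fun h => hα (h ▸ hβ))
    · rw [hHval]
      congr 1
      by_cases hα : α ∈ S
      · rw [dif_pos hα]
        congr 1
        refine Finset.sum_eq_single_of_mem α hα (fun β hβ hne => ?_)
        rw [hz β hβ hne, Hloc_zero]
      · rw [dif_neg hα, Hloc_zero α]
        congr 1
        exact Finset.sum_eq_zero fun β hβ => by
          rw [hz β hβ (fun h => hα (h ▸ hβ)), Hloc_zero]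
    · by_cases hα : α ∈ S
      · rw [dif_pos hα]; exact (hprop α hα).1
      · rw [dif_neg hα]; exact degLe_zero' _
    · intro γ hγ
      by_cases hα : α ∈ S
      · rw [dif_pos hα]; exact (hprop α hα).2 γ hγ
      · rw [dif_neg hα]; exact ordGe_zero' _ _
  -- reduction to zero of non-generator finite monomials
  have key1 : ∀ (α : K) (s : ℤ), 0 < s → indα α (-s) ≠ 0 → σα α < s →
      H (applyOp r p ((RatFunc.X - RatFunc.C α) ^ (-s))) = 0 := by
    intro α s hs hind hσ
    obtain ⟨T, qq, hRT, hHR, _, _⟩ :=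
      hcollapse _ α (fun β hβ => hAreg α β hβ s)
    have hord : ordGe α (-(s - σα α) + 1)
        (T - indα α (-s) • (RatFunc.X - RatFunc.C α) ^ (-(s - σα α))) := by
      have h1 := hindα α s
      have hTeq : T = applyOp r p ((RatFunc.X - RatFunc.C α) ^ (-s))
          - algebraMap K[X] (RatFunc K) qq := by rw [hRT]; ring
      rw [hTeq, sub_right_comm,
        show -(s - σα α) = -s + σα α by ring, show -s + σα α + 1 = -(s - σα α) + 1 by ring,
        show -(s - σα α) = -s + σα α by ring]
      exact ordGe_sub (by
        rw [show -s + σα α + 1 = -(s - σα α) + 1 by ring] at h1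
        rw [show -s + σα α + 1 = -(s - σα α) + 1 by ring]
        exact h1) (ordGe_poly (by omega) qq)
    have hstep := (hHloc1 α T (indα α (-s)) (s - σα α) (by omega) hind hord).1
    rw [show -σα α - (s - σα α) = -s by ring] at hstep
    have hstep2 := hstep hind
    rw [show -(s - σα α) - σα α = -s by ring, div_self hind, one_smul] at hstep2
    have hT2 : T - applyOp r p ((RatFunc.X - RatFunc.C α) ^ (-s))
        = -(algebraMap K[X] (RatFunc K) qq) := by rw [hRT]; ring
    rw [hT2] at hstep2
    have hloc2 : Hloc α (-(algebraMap K[X] (RatFunc K) qq))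
        = -(algebraMap K[X] (RatFunc K) qq) :=
      hHloc0 α _ (ordGe_neg (ordGe_poly le_rfl qq))
    rw [hHR, hstep2, hloc2, add_neg_cancel, Hinf_zero]
  -- reduction to zero of non-generator monomials at infinity
  have key2 : ∀ s : ℤ, 0 ≤ s → indinf (-s) ≠ 0 →
      H (applyOp r p ((RatFunc.X : RatFunc K) ^ s)) = 0 := by
    intro s hs hind
    have hQ : applyOp r p ((RatFunc.X : RatFunc K) ^ s)
        = algebraMap K[X] (RatFunc K) (Qpoly r p s) := applyOp_X_zpow r p hs
    have ht : 0 ≤ s - σinf := by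
      by_contra hcon
      exact hind (ind_zero_small (r := r) (p := p) (s := s) (σ := σinf) (by omega) (by rw [← hQ]; exact hindinf s))
    have hregall : ∀ β : K, ordGe β 0 (applyOp r p ((RatFunc.X : RatFunc K) ^ s)) := by
      intro β
      rw [hQ]
      exact ordGe_poly le_rfl _
    obtain ⟨T, qq, hRT, hHR, hTdeg, hTreg⟩ :=
      hcollapse _ 0 (fun β hβ => hregall β)
    have hT0 : T = 0 := by
      refine eq_zero_of_regAt_all (fun γ => ?_) hTdeg
      rw [← ordGe_zero_iff]
      have hTeq : T = applyOp r p ((RatFunc.X : RatFunc K) ^ s)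
          - algebraMap K[X] (RatFunc K) qq := by rw [hRT]; ring
      rw [hTeq]
      exact ordGe_sub (hregall γ) (ordGe_poly le_rfl qq)
    rw [hT0] at hRT
    rw [add_zero] at hRT
    rw [hT0, Hloc_zero 0, add_zero, ← hRT] at hHR
    have hpre : degLe (s - σinf - 1)
        (applyOp r p ((RatFunc.X : RatFunc K) ^ s)
          - indinf (-s) • (RatFunc.X : RatFunc K) ^ (s - σinf)) := hindinf s
    have hstep := (hHinf1 (applyOp r p ((RatFunc.X : RatFunc K) ^ s)) (indinf (-s))
      (s - σinf) ht hind hpre).1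
    rw [show -(s - σinf) - σinf = -s by ring, show s - σinf + σinf = s by ring] at hstep
    have hstep2 := hstep ⟨hind, by omega⟩
    rw [div_self hind, one_smul, sub_self, Hinf_zero] at hstep2
    rw [hHR, hstep2]
  -- identification of the indicial function at finite points
  have key3 : ∀ (α : K) (s : ℤ), indα α (-s)
      = eval ((-s : ℤ) : K) (braket (r + 1) (gA r p α (σα α))) := by
    intro α s
    have h1 := hindα α s
    rw [show -s + σα α + 1 = (σα α - s) + 1 by ring,
      show -s + σα α = σα α - s by ring] at h1
    have h2 := chiA_ordGe r p α (σα α) s (fun i hir hpi => (hσα α).2 ⟨i, hir, hpi, rfl⟩)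
    exact leading_unique h1 h2
  -- nonvanishing at non-roots of the leading coefficient
  have key4 : ∀ (α : K) (s : ℤ), eval α (p r) ≠ 0 → 0 < s → indα α (-s) ≠ 0 := by
    intro α s hroot hs
    rw [key3 α s, sigma_nonroot (hσα α) hroot]
    exact chi_nonroot_ne_zero hroot hs
  -- identification of the indicial function at infinity for large degrees
  have key5 : ∀ s : ℤ, (r : ℤ) < s → σinf ≤ s →
      indinf (-s) = eval ((s : ℤ) : K) (braket (r + 1) (gPsi r p σinf)) := by
    intro s h1 h2
    have h3 := hindinf s
    rw [applyOp_X_zpow r p (by omega)] at h3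
    rw [ind_eq_coeff (by omega) h3]
    exact coeff_Qpoly r p h1 h2
  -- the main membership statement
  have main_mem : ∀ g : RatFunc K, H (M g) ∈ Submodule.span K
      {f : RatFunc K |
        (∃ (α : K) (s : ℤ), Polynomial.eval α (p r) = 0 ∧ 0 < s ∧ indα α (-s) = 0 ∧
          f = H (applyOp r p ((RatFunc.X - RatFunc.C α) ^ (-s)))) ∨
        (∃ (α : K) (s : ℤ), Polynomial.eval α (p r) = 0 ∧ 0 < s ∧ s ≤ σα α ∧
          f = H (applyOp r p ((RatFunc.X - RatFunc.C α) ^ (-s)))) ∨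
        (∃ s : ℤ, 0 ≤ s ∧ indinf (-s) = 0 ∧ f = H (applyOp r p (RatFunc.X ^ s)))} := by
    intro g
    have hg := span_monomials g
    refine Submodule.span_induction ?_ ?_ ?_ ?_ hg
    · rintro x (⟨s, hs, rfl⟩ | ⟨α, s, hs, rfl⟩)
      · rw [hM]
        by_cases hind : indinf (-s) = 0
        · exact Submodule.subset_span (Or.inr (Or.inr ⟨s, hs, hind, rfl⟩))
        · rw [key2 s hs hind]
          exact Submodule.zero_mem _
      · rw [hM]
        by_cases hroot : Polynomial.eval α (p r) = 0
        · by_cases hind : indα α (-s) = 0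
          · exact Submodule.subset_span (Or.inl ⟨α, s, hroot, hs, hind, rfl⟩)
          · by_cases hσ : s ≤ σα α
            · exact Submodule.subset_span (Or.inr (Or.inl ⟨α, s, hroot, hs, hσ, rfl⟩))
            · rw [key1 α s hs hind (by omega)]
              exact Submodule.zero_mem _
        · have hind := key4 α s hroot hs
          have hσ : σα α < s := by
            rw [sigma_nonroot (hσα α) hroot]
            omega
          rw [key1 α s hs hind hσ]
          exact Submodule.zero_mem _
    · rw [map_zero, map_zero]
      exact Submodule.zero_mem _
    · intro x y _ _ hx hy
      rw [map_add, map_add]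
      exact Submodule.add_mem _ hx hy
    · intro a x _ hx
      rw [map_smul, map_smul]
      exact Submodule.smul_mem _ _ hx
  have heq : Submodule.map H (LinearMap.range M) = Submodule.span K
      {f : RatFunc K |
        (∃ (α : K) (s : ℤ), Polynomial.eval α (p r) = 0 ∧ 0 < s ∧ indα α (-s) = 0 ∧
          f = H (applyOp r p ((RatFunc.X - RatFunc.C α) ^ (-s)))) ∨
        (∃ (α : K) (s : ℤ), Polynomial.eval α (p r) = 0 ∧ 0 < s ∧ s ≤ σα α ∧
          f = H (applyOp r p ((RatFunc.X - RatFunc.C α) ^ (-s)))) ∨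
        (∃ s : ℤ, 0 ≤ s ∧ indinf (-s) = 0 ∧ f = H (applyOp r p (RatFunc.X ^ s)))} := by
    apply le_antisymm
    · rintro x hx
      obtain ⟨y, hy, rfl⟩ := Submodule.mem_map.mp hx
      obtain ⟨g, rfl⟩ := hy
      exact main_mem g
    · rw [Submodule.span_le]
      have hmem : ∀ g : RatFunc K, H (applyOp r p g)
          ∈ Submodule.map H (LinearMap.range M) := by
        intro g
        rw [← hM]
        exact Submodule.mem_map_of_mem (LinearMap.mem_range_self M g)
      rintro f (⟨α, s, _, _, _, rfl⟩ | ⟨α, s, _, _, _, rfl⟩ | ⟨s, _, _, rfl⟩) <;>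
        apply hmem
  refine ⟨heq, ?_⟩
  rw [heq]
  apply FiniteDimensional.span_of_finite
  -- finiteness of the generator set
  have hfinA : Set.Finite {f : RatFunc K |
      ∃ (α : K) (s : ℤ), Polynomial.eval α (p r) = 0 ∧ 0 < s ∧ indα α (-s) = 0 ∧
        f = H (applyOp r p ((RatFunc.X - RatFunc.C α) ^ (-s)))} := by
    have hsub : {f : RatFunc K |
        ∃ (α : K) (s : ℤ), Polynomial.eval α (p r) = 0 ∧ 0 < s ∧ indα α (-s) = 0 ∧
          f = H (applyOp r p ((RatFunc.X - RatFunc.C α) ^ (-s)))} ⊆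
        ⋃ α ∈ {α : K | (p r).IsRoot α},
          (fun s : ℤ => H (applyOp r p ((RatFunc.X - RatFunc.C α) ^ (-s)))) ''
            {s : ℤ | indα α (-s) = 0} := by
      rintro f ⟨α, s, h1, h2, h3, rfl⟩
      exact Set.mem_biUnion h1 ⟨s, h3, rfl⟩
    refine Set.Finite.subset (Set.Finite.biUnion (Polynomial.finite_setOf_isRoot hpr)
      (fun α _ => Set.Finite.image _ ?_)) hsub
    have hzsub : {s : ℤ | indα α (-s) = 0} ⊆
        (fun s : ℤ => ((-s : ℤ) : K)) ⁻¹'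
          {x : K | (braket (r + 1) (gA r p α (σα α))).IsRoot x} := by
      intro s hs
      have := key3 α s
      simp only [Set.mem_setOf_eq] at hs
      simp only [Set.mem_preimage, Set.mem_setOf_eq, Polynomial.IsRoot]
      rw [← this]
      exact hs
    refine Set.Finite.subset (Set.Finite.preimage ?_ ?_) hzsub
    · intro a _ b _ hab
      have : ((-a : ℤ) : K) = ((-b : ℤ) : K) := hab
      have := Int.cast_injective this
      omega
    · refine Polynomial.finite_setOf_isRoot (braket_ne_zero ?_)
      obtain ⟨i₀, hi₀r, hp₀, hval⟩ := (hσα α).1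
      refine ⟨i₀, Finset.mem_range.mpr (by omega), ?_⟩
      have : gA r p α (σα α) i₀ = eval α (p i₀ /ₘ (X - C α) ^ rootMultiplicity α (p i₀)) := by
        simp [gA, hp₀, hval.symm]
      rw [this]
      exact eval_divByMonic_pow_rootMultiplicity_ne_zero α hp₀
  have hfinB : Set.Finite {f : RatFunc K |
      ∃ (α : K) (s : ℤ), Polynomial.eval α (p r) = 0 ∧ 0 < s ∧ s ≤ σα α ∧
        f = H (applyOp r p ((RatFunc.X - RatFunc.C α) ^ (-s)))} := by
    have hsub : {f : RatFunc K |
        ∃ (α : K) (s : ℤ), Polynomial.eval α (p r) = 0 ∧ 0 < s ∧ s ≤ σα α ∧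
          f = H (applyOp r p ((RatFunc.X - RatFunc.C α) ^ (-s)))} ⊆
        ⋃ α ∈ {α : K | (p r).IsRoot α},
          (fun s : ℤ => H (applyOp r p ((RatFunc.X - RatFunc.C α) ^ (-s)))) ''
            (Set.Icc 1 (σα α)) := by
      rintro f ⟨α, s, h1, h2, h3, rfl⟩
      exact Set.mem_biUnion h1 ⟨s, Set.mem_Icc.mpr ⟨by omega, h3⟩, rfl⟩
    exact Set.Finite.subset (Set.Finite.biUnion (Polynomial.finite_setOf_isRoot hpr)
      (fun α _ => Set.Finite.image _ (Set.finite_Icc _ _))) hsub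
  have hfinC : Set.Finite {f : RatFunc K |
      ∃ s : ℤ, 0 ≤ s ∧ indinf (-s) = 0 ∧ f = H (applyOp r p (RatFunc.X ^ s))} := by
    have hsub : {f : RatFunc K |
        ∃ s : ℤ, 0 ≤ s ∧ indinf (-s) = 0 ∧ f = H (applyOp r p (RatFunc.X ^ s))} ⊆
        (fun s : ℤ => H (applyOp r p (RatFunc.X ^ s))) ''
          {s : ℤ | 0 ≤ s ∧ indinf (-s) = 0} := by
      rintro f ⟨s, h1, h2, rfl⟩
      exact ⟨s, ⟨h1, h2⟩, rfl⟩
    refine Set.Finite.subset (Set.Finite.image _ ?_) hsub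
    have hzsub : {s : ℤ | 0 ≤ s ∧ indinf (-s) = 0} ⊆
        (Set.Icc (0 : ℤ) (max (r : ℤ) σinf)) ∪
          ((fun s : ℤ => ((s : ℤ) : K)) ⁻¹'
            {x : K | (braket (r + 1) (gPsi r p σinf)).IsRoot x}) := by
      rintro s ⟨h1, h2⟩
      by_cases hcase : s ≤ max (r : ℤ) σinf
      · exact Or.inl (Set.mem_Icc.mpr ⟨h1, hcase⟩)
      · refine Or.inr ?_
        simp only [Set.mem_preimage, Set.mem_setOf_eq, Polynomial.IsRoot]
        rw [← key5 s (by omega) (by omega)]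
        exact h2
    refine Set.Finite.subset (Set.Finite.union (Set.finite_Icc _ _)
      (Set.Finite.preimage ?_ ?_)) hzsub
    · intro a _ b _ hab
      exact Int.cast_injective hab
    · exact Polynomial.finite_setOf_isRoot (psi_ne_zero hσinf.1)
  have hset : {f : RatFunc K |
      (∃ (α : K) (s : ℤ), Polynomial.eval α (p r) = 0 ∧ 0 < s ∧ indα α (-s) = 0 ∧
        f = H (applyOp r p ((RatFunc.X - RatFunc.C α) ^ (-s)))) ∨
      (∃ (α : K) (s : ℤ), Polynomial.eval α (p r) = 0 ∧ 0 < s ∧ s ≤ σα α ∧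
        f = H (applyOp r p ((RatFunc.X - RatFunc.C α) ^ (-s)))) ∨
      (∃ s : ℤ, 0 ≤ s ∧ indinf (-s) = 0 ∧ f = H (applyOp r p (RatFunc.X ^ s)))} =
      {f : RatFunc K |
        ∃ (α : K) (s : ℤ), Polynomial.eval α (p r) = 0 ∧ 0 < s ∧ indα α (-s) = 0 ∧
          f = H (applyOp r p ((RatFunc.X - RatFunc.C α) ^ (-s)))} ∪
      ({f : RatFunc K |
        ∃ (α : K) (s : ℤ), Polynomial.eval α (p r) = 0 ∧ 0 < s ∧ s ≤ σα α ∧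
          f = H (applyOp r p ((RatFunc.X - RatFunc.C α) ^ (-s)))} ∪
      {f : RatFunc K |
        ∃ s : ℤ, 0 ≤ s ∧ indinf (-s) = 0 ∧ f = H (applyOp r p (RatFunc.X ^ s))}) := rfl
  rw [hset]
  exact Set.Finite.union hfinA (Set.Finite.union hfinB hfinC)
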